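/- Let A be a strictly positive operator on H and T ∈ B_A(H). Then w_A(T)³ ≤ (1/4)w_A(T³) + (1/4)w_A(T²T^{♯A} + T^{♯A}T² + TT^{♯A}T). -/

import Mathlib

set_option maxHeartbeats 1000000
set_option synthInstance.maxHeartbeats 400000
set_option linter.unusedSectionVars false


noncomputable section
open Complex ContinuousLinearMap

variable {H : Type*} [NormedAddCommGroup H] [InnerProductSpace ℂ H] [CompleteSpace H]

/-- The `A`-inner product `⟨x,y⟩_A = ⟨Ax,y⟩`. -/
def innA (A : H →L[ℂ] H) (x y : H) : ℂ := inner ℂ (A x) y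

/-- The `A`-seminorm of a vector, `‖x‖_A = √⟨x,x⟩_A`. -/
def vnormA (A : H →L[ℂ] H) (x : H) : ℝ := Real.sqrt (innA A x x).re

/-- The `A`-numerical radius `w_A(T) = sup{|⟨Tx,x⟩_A| : ‖x‖_A = 1}`. -/
def wA (A T : H →L[ℂ] H) : ℝ :=
  sSup {r : ℝ | ∃ x : H, vnormA A x = 1 ∧ r = ‖innA A (T x) x‖}

/-- The `A`-operator seminorm, `sup` over `A`-unit vectors in the closure of the range of `A`. -/
def opNormA (A T : H →L[ℂ] H) : ℝ :=
  sSup {r : ℝ | ∃ x : H, x ∈ closure (Set.range A) ∧ vnormA A x = 1 ∧ r = vnormA A (T x)}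

/-- The `A`-operator seminorm, `sup` over all `A`-unit vectors (used when `A > 0`). -/
def opNormA' (A T : H →L[ℂ] H) : ℝ :=
  sSup {r : ℝ | ∃ x : H, vnormA A x = 1 ∧ r = vnormA A (T x)}

/-- The `A`-Crawford number `c_A(T) = inf{|⟨Tx,x⟩_A| : ‖x‖_A = 1}`. -/
def cA (A T : H →L[ℂ] H) : ℝ :=
  sInf {r : ℝ | ∃ x : H, vnormA A x = 1 ∧ r = ‖innA A (T x) x‖}

/-- The `A`-minimum modulus `m_A(T) = inf{‖Tx‖_A : ‖x‖_A = 1}` (version for `A > 0`). -/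
def mA (A T : H →L[ℂ] H) : ℝ :=
  sInf {r : ℝ | ∃ x : H, vnormA A x = 1 ∧ r = vnormA A (T x)}

/-- `S` is an `A`-adjoint of `T`, i.e. `A S = T* A`. -/
def IsAAdjoint (A T S : H →L[ℂ] H) : Prop :=
  A.comp S = (ContinuousLinearMap.adjoint T).comp A

/-- `A` is strictly positive: positive and `⟨Ax,x⟩ > 0` for all `x ≠ 0`. -/
def StrictPos (A : H →L[ℂ] H) : Prop :=
  A.IsPositive ∧ ∀ x : H, x ≠ 0 → 0 < (innA A x x).re

/-- The inner product on `H ⊕ H`. -/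
def inn2 (u v : H × H) : ℂ := inner ℂ u.1 v.1 + inner ℂ u.2 v.2

/-- `B = diag(A, A)` acting on `H ⊕ H`. -/
def Bop (A : H →L[ℂ] H) : H × H →L[ℂ] H × H := A.prodMap A

/-- The `B`-seminorm on `H ⊕ H`. -/
def vnormB (A : H →L[ℂ] H) (u : H × H) : ℝ := Real.sqrt (inn2 (Bop A u) u).re

/-- The `B`-numerical radius on `H ⊕ H`, where `B = diag(A, A)`. -/
def wB (A : H →L[ℂ] H) (S : H × H →L[ℂ] H × H) : ℝ :=
  sSup {r : ℝ | ∃ u : H × H, vnormB A u = 1 ∧ r = ‖inn2 (Bop A (S u)) u‖}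

/-- The `2 × 2` operator matrix `[[X, Y], [Z, W]]` acting on `H ⊕ H`. -/
def blk (X Y Z W : H →L[ℂ] H) : H × H →L[ℂ] H × H :=
  ((X.comp (ContinuousLinearMap.fst ℂ H H)) + (Y.comp (ContinuousLinearMap.snd ℂ H H))).prod
    ((Z.comp (ContinuousLinearMap.fst ℂ H H)) + (W.comp (ContinuousLinearMap.snd ℂ H H)))

namespace S13
variable {A Q : H →L[ℂ] H}
def Br (A Q : H →L[ℂ] H) : Prop :=
  (∀ x y : H, innA A x y = inner ℂ (Q x) (Q y)) ∧ (∀ x : H, Q x = 0 → x = 0)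
def mv (A T S : H →L[ℂ] H) : Prop := ∀ x y : H, innA A (T x) y = innA A x (S y)
def wb (A Q : H →L[ℂ] H) (w : ℝ) (T : H →L[ℂ] H) : Prop :=
  ∀ x : H, ‖innA A (T x) x‖ ≤ w * ‖Q x‖^2
def nb (Q : H →L[ℂ] H) (c : ℝ) (T : H →L[ℂ] H) : Prop :=
  ∀ x : H, ‖Q (T x)‖ ≤ c * ‖Q x‖

lemma innA_add_left (A : H →L[ℂ] H) (x x' y : H) :
    innA A (x + x') y = innA A x y + innA A x' y := by simp [innA, inner_add_left]
lemma innA_sub_left (A : H →L[ℂ] H) (x x' y : H) :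
    innA A (x - x') y = innA A x y - innA A x' y := by simp [innA, inner_sub_left]
lemma innA_add_right (A : H →L[ℂ] H) (x y y' : H) :
    innA A x (y + y') = innA A x y + innA A x y' := by simp [innA, inner_add_right]
lemma innA_sub_right (A : H →L[ℂ] H) (x y y' : H) :
    innA A x (y - y') = innA A x y - innA A x y' := by simp [innA, inner_sub_right]
lemma innA_smul_left (A : H →L[ℂ] H) (c : ℂ) (x y : H) :
    innA A (c • x) y = starRingEnd ℂ c * innA A x y := by simp [innA, inner_smul_left, mul_comm]
lemma innA_smul_right (A : H →L[ℂ] H) (c : ℂ) (x y : H) :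
    innA A x (c • y) = c * innA A x y := by simp [innA, inner_smul_right]

lemma absC_sub_le (a b : ℂ) : ‖a - b‖ ≤ ‖a‖ + ‖b‖ := by
  exact norm_sub_le a b

lemma absC_add_le (a b : ℂ) : ‖a + b‖ ≤ ‖a‖ + ‖b‖ := by
  exact norm_add_le a b

section basic
variable (hB : Br A Q)
include hB

lemma abs_le (x y : H) : ‖innA A x y‖ ≤ ‖Q x‖ * ‖Q y‖ := by
  rw [hB.1 x y]; exact norm_inner_le_norm _ _
lemma conj_symm (x y : H) : innA A y x = starRingEnd ℂ (innA A x y) := by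
  rw [hB.1 x y, hB.1 y x, inner_conj_symm]
lemma self_eq (x : H) : innA A x x = ((‖Q x‖^2 : ℝ) : ℂ) := by
  rw [hB.1 x x]
  exact_mod_cast inner_self_eq_norm_sq_to_K (𝕜 := ℂ) (Q x)
lemma re_self (x : H) : (innA A x x).re = ‖Q x‖^2 := by rw [self_eq hB, Complex.ofReal_re]
lemma par (x y : H) : ‖Q (x+y)‖^2 + ‖Q (x-y)‖^2 = 2*(‖Q x‖^2 + ‖Q y‖^2) := by
  have h := parallelogram_law_with_norm ℂ (Q x) (Q y)
  simp only [map_add, map_sub]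
  nlinarith [h]
lemma vnorm_eq (x : H) : vnormA A x = ‖Q x‖ := by
  rw [vnormA, re_self hB]; exact Real.sqrt_sq (norm_nonneg _)

lemma mv.symm {T S : H →L[ℂ] H} (h : mv A T S) : mv A S T := by
  intro x y
  calc innA A (S x) y = starRingEnd ℂ (innA A y (S x)) := conj_symm hB y (S x)
    _ = starRingEnd ℂ (innA A (T y) x) := by rw [h y x]
    _ = innA A x (T y) := (conj_symm hB (T y) x).symm

lemma mv.abs_eq {T S : H →L[ℂ] H} (h : mv A T S) (x : H) :
    ‖innA A (S x) x‖ = ‖innA A (T x) x‖ := by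
  rw [mv.symm hB h x x, conj_symm hB (T x) x]
  exact Complex.norm_conj _

end basic

lemma mv.comp {T S U V : H →L[ℂ] H} (h1 : mv A T S) (h2 : mv A U V) :
    mv A (T * U) (V * S) := by
  intro x y
  rw [ContinuousLinearMap.mul_apply, ContinuousLinearMap.mul_apply, h1 (U x) y, h2 x (S y)]

lemma mv.add {T S U V : H →L[ℂ] H} (h1 : mv A T S) (h2 : mv A U V) :
    mv A (T + U) (S + V) := by
  intro x y
  simp only [ContinuousLinearMap.add_apply, innA_add_left, innA_add_right, h1 x y, h2 x y]

lemma mv.smul {T S : H →L[ℂ] H} (c : ℂ) (h : mv A T S) :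
    mv A (c • T) ((starRingEnd ℂ c) • S) := by
  intro x y
  simp only [ContinuousLinearMap.smul_apply, innA_smul_left, innA_smul_right, h x y]

lemma sq_le_imp {a b c : ℝ} (ha : 0 ≤ a) (hb : 0 ≤ b) (h : a^2 ≤ c * b^2) :
    a ≤ Real.sqrt c * b := by
  rcases le_or_gt 0 c with hc | hc
  · calc a = Real.sqrt (a^2) := (Real.sqrt_sq ha).symm
      _ ≤ Real.sqrt (c * b^2) := Real.sqrt_le_sqrt h
      _ = Real.sqrt c * b := by rw [Real.sqrt_mul hc, Real.sqrt_sq hb]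
  · have h0 : a^2 ≤ 0 := le_trans h (mul_nonpos_of_nonpos_of_nonneg hc.le (sq_nonneg b))
    have : a = 0 := by nlinarith
    rw [this]
    positivity

section bounds
variable (hB : Br A Q)
include hB

lemma nb.wb {c : ℝ} {T : H →L[ℂ] H} (h : nb Q c T) : wb A Q c T := by
  intro x
  calc ‖innA A (T x) x‖ ≤ ‖Q (T x)‖ * ‖Q x‖ := abs_le hB _ _
    _ ≤ (c * ‖Q x‖) * ‖Q x‖ := mul_le_mul_of_nonneg_right (h x) (norm_nonneg _)
    _ = c * ‖Q x‖^2 := by ring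

lemma wb.nb {w : ℝ} {T : H →L[ℂ] H} (h : wb A Q w T) (hw : 0 ≤ w) : nb Q (2*w) T := by
  have claim1 : ∀ x y : H,
      ‖innA A (T x) y + innA A (T y) x‖ ≤ w * (‖Q x‖^2 + ‖Q y‖^2) := by
    intro x y
    have e1 : innA A (T (x+y)) (x+y) - innA A (T (x-y)) (x-y)
        = 2*(innA A (T x) y + innA A (T y) x) := by
      simp only [map_add, map_sub, innA_add_left, innA_sub_left, innA_add_right,
        innA_sub_right]
      ring
    have b1 := h (x+y); have b2 := h (x-y)
    have e2 : ‖2*(innA A (T x) y + innA A (T y) x)‖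
        ≤ w * ‖Q (x+y)‖^2 + w * ‖Q (x-y)‖^2 := by
      rw [← e1]
      exact le_trans (absC_sub_le _ _) (add_le_add b1 b2)
    rw [norm_mul] at e2
    have hpar := par hB x y
    simp only [Complex.norm_two] at e2
    nlinarith [norm_nonneg (innA A (T x) y + innA A (T y) x)]
  have claim2 : ∀ x y : H,
      ‖innA A (T x) y - innA A (T y) x‖ ≤ w * (‖Q x‖^2 + ‖Q y‖^2) := by
    intro x y
    have h1 := claim1 x ((Complex.I : ℂ) • y)
    have e1 : innA A (T x) ((Complex.I : ℂ) • y) + innA A (T ((Complex.I : ℂ) • y)) x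
        = Complex.I * (innA A (T x) y - innA A (T y) x) := by
      rw [map_smul, innA_smul_right, innA_smul_left]
      simp [Complex.conj_I]
      ring
    rw [e1, norm_mul, Complex.norm_I, one_mul] at h1
    have e2 : ‖Q ((Complex.I : ℂ) • y)‖ = ‖Q y‖ := by
      rw [map_smul, norm_smul]
      simp
    rwa [e2] at h1
  have claim : ∀ x y : H, ‖innA A (T x) y‖ ≤ w * (‖Q x‖^2 + ‖Q y‖^2) := by
    intro x y
    have e1 : (2:ℂ) * innA A (T x) y
        = (innA A (T x) y + innA A (T y) x) + (innA A (T x) y - innA A (T y) x) := by ring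
    have e2 : ‖(2:ℂ) * innA A (T x) y‖ ≤ 2 * (w * (‖Q x‖^2 + ‖Q y‖^2)) := by
      rw [e1]
      exact le_trans (absC_add_le _ _) (by linarith [claim1 x y, claim2 x y])
    rw [norm_mul, Complex.norm_two] at e2
    linarith
  intro x
  by_cases hx : Q x = 0
  · have hx0 : x = 0 := hB.2 x hx
    subst hx0
    simp
  by_cases hTx : Q (T x) = 0
  · rw [hTx]
    simp only [norm_zero]
    positivity
  · have hcx : 0 < ‖Q x‖ := norm_pos_iff.mpr hx
    have hcT : 0 < ‖Q (T x)‖ := norm_pos_iff.mpr hTx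
    set t : ℝ := ‖Q x‖ / ‖Q (T x)‖ with ht
    have ht0 : 0 < t := div_pos hcx hcT
    have h1 := claim x ((t : ℂ) • T x)
    have e1 : innA A (T x) ((t : ℂ) • T x) = (t:ℂ) * ((‖Q (T x)‖^2 : ℝ) : ℂ) := by
      rw [innA_smul_right, self_eq hB]
    have e2 : ‖innA A (T x) ((t : ℂ) • T x)‖ = t * ‖Q (T x)‖^2 := by
      rw [e1, norm_mul]
      simp only [Complex.norm_real, Real.norm_eq_abs]
      rw [_root_.abs_of_pos ht0, _root_.abs_of_nonneg (by positivity : (0:ℝ) ≤ ‖Q (T x)‖^2)]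
    have e3 : ‖Q ((t:ℂ) • T x)‖ = t * ‖Q (T x)‖ := by
      rw [map_smul, norm_smul, Complex.norm_real, Real.norm_eq_abs, _root_.abs_of_pos ht0]
    rw [e2, e3] at h1
    have e4 : t * ‖Q (T x)‖ = ‖Q x‖ := by
      rw [ht, div_mul_cancel₀ _ (ne_of_gt hcT)]
    rw [e4] at h1
    have e5 : t * ‖Q (T x)‖^2 = ‖Q x‖ * ‖Q (T x)‖ := by
      rw [pow_two, ← mul_assoc, e4]
    rw [e5] at h1
    have h6 : ‖Q x‖ * ‖Q (T x)‖ ≤ ‖Q x‖ * (2 * w * ‖Q x‖) := by nlinarith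
    have := (mul_le_mul_iff_right₀ hcx).mp h6
    linarith

end bounds

section sa
variable (hB : Br A Q)
include hB

lemma nb_of_sa {w : ℝ} {R : H →L[ℂ] H} (hsa : mv A R R) (h : wb A Q w R) (hw : 0 ≤ w) :
    nb Q w R := by
  have claim : ∀ x y : H, (innA A (R x) y).re ≤ (w/2) * (‖Q x‖^2 + ‖Q y‖^2) := by
    intro x y
    have e1 : innA A (R (x+y)) (x+y) - innA A (R (x-y)) (x-y)
        = 2*(innA A (R x) y + innA A (R y) x) := by
      simp only [map_add, map_sub, innA_add_left, innA_sub_left, innA_add_right,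
        innA_sub_right]
      ring
    have e2 : innA A (R y) x = starRingEnd ℂ (innA A (R x) y) := by
      rw [hsa y x]
      exact conj_symm hB (R x) y
    have e1' : innA A (R (x+y)) (x+y) - innA A (R (x-y)) (x-y)
        = 2*(innA A (R x) y + starRingEnd ℂ (innA A (R x) y)) := by rw [e1, e2]
    have e3 : (innA A (R (x+y)) (x+y)).re - (innA A (R (x-y)) (x-y)).re
        = 4 * (innA A (R x) y).re := by
      have h0 := congrArg Complex.re e1'
      simp only [Complex.sub_re, Complex.mul_re, Complex.add_re, Complex.add_im,
        Complex.conj_re, Complex.conj_im, Complex.re_ofNat, Complex.im_ofNat] at h0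
      linarith [h0]
    have b1 := h (x+y); have b2 := h (x-y)
    have r1 : (innA A (R (x+y)) (x+y)).re ≤ w * ‖Q (x+y)‖^2 :=
      le_trans (Complex.re_le_norm _) b1
    have r2 : -(innA A (R (x-y)) (x-y)).re ≤ w * ‖Q (x-y)‖^2 := by
      have := norm_nonneg (innA A (R (x-y)) (x-y))
      have h2 := neg_abs_le (innA A (R (x-y)) (x-y)).re
      have h3 : |(innA A (R (x-y)) (x-y)).re| ≤ ‖innA A (R (x-y)) (x-y)‖ :=
        Complex.abs_re_le_norm _
      linarith [b2]
    have hpar := par hB x y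
    nlinarith [e3, r1, r2, hpar, hw]
  intro x
  by_cases hx : Q x = 0
  · have hx0 : x = 0 := hB.2 x hx
    subst hx0
    simp
  by_cases hRx : Q (R x) = 0
  · rw [hRx]
    simp only [norm_zero]
    positivity
  · have hcx : 0 < ‖Q x‖ := norm_pos_iff.mpr hx
    have hcR : 0 < ‖Q (R x)‖ := norm_pos_iff.mpr hRx
    set t : ℝ := ‖Q x‖ / ‖Q (R x)‖ with ht
    have ht0 : 0 < t := div_pos hcx hcR
    have h1 := claim x ((t : ℂ) • R x)
    have e1 : (innA A (R x) ((t : ℂ) • R x)).re = t * ‖Q (R x)‖^2 := by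
      rw [innA_smul_right, self_eq hB]
      rw [← Complex.ofReal_mul, Complex.ofReal_re]
    have e3 : ‖Q ((t:ℂ) • R x)‖ = t * ‖Q (R x)‖ := by
      rw [map_smul, norm_smul, Complex.norm_real, Real.norm_eq_abs, _root_.abs_of_pos ht0]
    rw [e1, e3] at h1
    have e4 : t * ‖Q (R x)‖ = ‖Q x‖ := by
      rw [ht, div_mul_cancel₀ _ (ne_of_gt hcR)]
    rw [e4] at h1
    have e5 : t * ‖Q (R x)‖^2 = ‖Q x‖ * ‖Q (R x)‖ := by
      rw [pow_two, ← mul_assoc, e4]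
    rw [e5] at h1
    have h6 : ‖Q x‖ * ‖Q (R x)‖ ≤ ‖Q x‖ * (w * ‖Q x‖) := by nlinarith
    have := (mul_le_mul_iff_right₀ hcx).mp h6
    linarith

end sa

/-! ### wA as sSup -/

def setW (A T : H →L[ℂ] H) : Set ℝ :=
  {r : ℝ | ∃ x : H, vnormA A x = 1 ∧ r = ‖innA A (T x) x‖}

lemma wA_eq (A T : H →L[ℂ] H) : wA A T = sSup (setW A T) := rfl

lemma setW_nonempty (hone : ∃ x : H, vnormA A x = 1) (T : H →L[ℂ] H) :
    (setW A T).Nonempty := by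
  obtain ⟨x, hx⟩ := hone
  exact ⟨_, x, hx, rfl⟩

lemma wA_le (hone : ∃ x : H, vnormA A x = 1) {c : ℝ} {T : H →L[ℂ] H}
    (h : ∀ x : H, vnormA A x = 1 → ‖innA A (T x) x‖ ≤ c) : wA A T ≤ c := by
  rw [wA_eq]
  apply csSup_le (setW_nonempty hone T)
  rintro r ⟨x, hx, rfl⟩
  exact h x hx

lemma le_wA {T : H →L[ℂ] H} (hb : BddAbove (setW A T)) {x : H} (hx : vnormA A x = 1) :
    ‖innA A (T x) x‖ ≤ wA A T :=
  le_csSup hb ⟨x, hx, rfl⟩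

lemma wA_nonneg (hone : ∃ x : H, vnormA A x = 1) (T : H →L[ℂ] H) : 0 ≤ wA A T := by
  by_cases hb : BddAbove (setW A T)
  · obtain ⟨x₀, hx₀⟩ := hone
    exact le_trans (norm_nonneg _) (le_wA hb hx₀)
  · rw [wA_eq, Real.sSup_of_not_bddAbove hb]

section wset
variable (hB : Br A Q)
include hB

lemma bddAbove_of_wb {c : ℝ} {T : H →L[ℂ] H} (h : wb A Q c T) : BddAbove (setW A T) := by
  refine ⟨c, ?_⟩
  rintro r ⟨x, hx, rfl⟩
  have := h x
  rw [vnorm_eq hB] at hx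
  rw [hx] at this
  simpa using this

lemma wA_wb (hone : ∃ x : H, vnormA A x = 1) {T : H →L[ℂ] H}
    (hb : BddAbove (setW A T)) : wb A Q (wA A T) T := by
  intro x
  by_cases hx : Q x = 0
  · have hx0 : x = 0 := hB.2 x hx
    subst hx0
    have h1 : innA A (T 0) 0 = 0 := by simp [innA]
    rw [h1]
    simp
  · have hc0 : 0 < ‖Q x‖ := norm_pos_iff.mpr hx
    set c : ℝ := ‖Q x‖ with hc
    have hx' : vnormA A (((c⁻¹ : ℝ) : ℂ) • x) = 1 := by
      rw [vnorm_eq hB, map_smul, norm_smul, Complex.norm_real, Real.norm_eq_abs,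
        _root_.abs_of_pos (by positivity)]
      field_simp
      exact hc.symm
    have hmem := le_wA hb hx'
    have e1 : innA A (T (((c⁻¹ : ℝ) : ℂ) • x)) (((c⁻¹ : ℝ) : ℂ) • x)
        = ((c⁻¹:ℝ):ℂ) * ((c⁻¹:ℝ):ℂ) * innA A (T x) x := by
      rw [map_smul, innA_smul_left, innA_smul_right, Complex.conj_ofReal]
      ring
    rw [e1] at hmem
    have habs : ‖((c⁻¹:ℝ):ℂ) * ((c⁻¹:ℝ):ℂ) * innA A (T x) x‖
        = c⁻¹ * (c⁻¹ * ‖innA A (T x) x‖) := by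
      rw [norm_mul, norm_mul, Complex.norm_real, Real.norm_eq_abs, _root_.abs_of_pos (inv_pos.mpr hc0)]
      ring
    rw [habs] at hmem
    have key : ‖innA A (T x) x‖
        = (c*c) * (c⁻¹ * (c⁻¹ * ‖innA A (T x) x‖)) := by
      field_simp
    rw [pow_two]
    calc ‖innA A (T x) x‖
        = (c*c) * (c⁻¹ * (c⁻¹ * ‖innA A (T x) x‖)) := key
      _ ≤ (c*c) * wA A T := mul_le_mul_of_nonneg_left hmem (by positivity)
      _ = wA A T * (c*c) := mul_comm _ _
end wset

section key
variable (hB : Br A Q)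
include hB

lemma key {R : H →L[ℂ] H} (hsa : mv A R R) {u w1 : ℝ}
    (hu : 0 ≤ u) (hw1 : 0 ≤ w1) (hwb : wb A Q w1 R) (hwb3 : wb A Q u (R*(R*R)))
    (hle : ∀ w' : ℝ, 0 ≤ w' → wb A Q w' R → w1 ≤ w') : w1^3 ≤ u := by
  have happ3 : ∀ x : H, (R*(R*R)) x = R (R (R x)) := by
    intro x; simp [ContinuousLinearMap.mul_apply]
  have hsa3 : mv A (R*(R*R)) (R*(R*R)) := by
    have h1 : mv A (R*(R*R)) ((R*R)*R) := mv.comp hsa (mv.comp hsa hsa)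
    rwa [mul_assoc] at h1
  have hn1 : nb Q w1 R := nb_of_sa hB hsa hwb hw1
  have hn3 : nb Q u (R*(R*R)) := nb_of_sa hB hsa3 hwb3 hu
  have hn3' : ∀ x : H, ‖Q (R (R (R x)))‖ ≤ u * ‖Q x‖ := by
    intro x; have := hn3 x; rwa [happ3 x] at this
  have h2 : ∀ x : H, ‖Q (R (R x))‖^2 ≤ (u*w1) * ‖Q x‖^2 := by
    intro x
    have e1 : innA A (R (R x)) (R (R x)) = innA A (R (R (R x))) (R x) := by
      rw [hsa (R (R x)) (R x)]
    calc ‖Q (R (R x))‖^2 = (innA A (R (R x)) (R (R x))).re := (re_self hB _).symm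
      _ = (innA A (R (R (R x))) (R x)).re := by rw [e1]
      _ ≤ ‖innA A (R (R (R x))) (R x)‖ := Complex.re_le_norm _
      _ ≤ ‖Q (R (R (R x)))‖ * ‖Q (R x)‖ := abs_le hB _ _
      _ ≤ (u * ‖Q x‖) * (w1 * ‖Q x‖) :=
          mul_le_mul (hn3' x) (hn1 x) (norm_nonneg _) (by positivity)
      _ = (u*w1) * ‖Q x‖^2 := by ring
  have h2' : ∀ x : H, ‖Q (R (R x))‖ ≤ Real.sqrt (u*w1) * ‖Q x‖ := fun x =>
    sq_le_imp (norm_nonneg _) (norm_nonneg _) (h2 x)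
  have h1 : ∀ x : H, ‖Q (R x)‖^2 ≤ Real.sqrt (u*w1) * ‖Q x‖^2 := by
    intro x
    have e1 : innA A (R x) (R x) = innA A (R (R x)) x := (hsa (R x) x).symm
    calc ‖Q (R x)‖^2 = (innA A (R x) (R x)).re := (re_self hB _).symm
      _ = (innA A (R (R x)) x).re := by rw [e1]
      _ ≤ ‖innA A (R (R x)) x‖ := Complex.re_le_norm _
      _ ≤ ‖Q (R (R x))‖ * ‖Q x‖ := abs_le hB _ _
      _ ≤ (Real.sqrt (u*w1) * ‖Q x‖) * ‖Q x‖ :=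
          mul_le_mul_of_nonneg_right (h2' x) (norm_nonneg _)
      _ = Real.sqrt (u*w1) * ‖Q x‖^2 := by ring
  have h1' : nb Q (Real.sqrt (Real.sqrt (u*w1))) R := fun x =>
    sq_le_imp (norm_nonneg _) (norm_nonneg _) (h1 x)
  have hwb' : wb A Q (Real.sqrt (Real.sqrt (u*w1))) R := nb.wb hB h1'
  have hfin : w1 ≤ Real.sqrt (Real.sqrt (u*w1)) := hle _ (Real.sqrt_nonneg _) hwb'
  have huw : 0 ≤ u * w1 := mul_nonneg hu hw1
  have h4 : (Real.sqrt (Real.sqrt (u*w1)))^4 = u*w1 := by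
    have : ((Real.sqrt (Real.sqrt (u*w1)))^2)^2 = u*w1 := by
      rw [Real.sq_sqrt (Real.sqrt_nonneg _), Real.sq_sqrt huw]
    nlinarith [this]
  have h5 : w1^4 ≤ u * w1 := by
    calc w1^4 ≤ (Real.sqrt (Real.sqrt (u*w1)))^4 :=
          pow_le_pow_left₀ hw1 hfin 4
      _ = u*w1 := h4
  rcases eq_or_lt_of_le hw1 with h0 | h0
  · rw [← h0]; simpa using hu
  · nlinarith [h5, h0]

end key

lemma br_of_strictPos {A : H →L[ℂ] H} (hA : StrictPos A) : Br A (CFC.sqrt A) := by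
  have hpos : (0:H→L[ℂ]H) ≤ A := (ContinuousLinearMap.nonneg_iff_isPositive A).2 hA.1
  set Q := CFC.sqrt A with hQdef
  have hmul : Q * Q = A := CFC.sqrt_mul_sqrt_self A hpos
  have hQpos : (0:H→L[ℂ]H) ≤ Q := CFC.sqrt_nonneg A
  have hQsa : IsSelfAdjoint Q :=
    ((ContinuousLinearMap.nonneg_iff_isPositive Q).1 hQpos).isSelfAdjoint
  have hadj : ContinuousLinearMap.adjoint Q = Q := hQsa
  have h1 : ∀ x y : H, innA A x y = inner ℂ (Q x) (Q y) := by
    intro x y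
    have hx : A x = Q (Q x) := by rw [← hmul]; rfl
    have h2 : (inner ℂ (ContinuousLinearMap.adjoint Q (Q x)) y : ℂ) = inner ℂ (Q x) (Q y) :=
      ContinuousLinearMap.adjoint_inner_left Q y (Q x)
    rw [hadj] at h2
    rw [innA, hx, h2]
  refine ⟨h1, ?_⟩
  intro x hx
  by_contra hx0
  have h2 := hA.2 x hx0
  rw [h1 x x, hx] at h2
  simp at h2

lemma mv_of_isAAdjoint {A : H →L[ℂ] H} (hA : StrictPos A) {T S : H →L[ℂ] H}
    (hS : IsAAdjoint A T S) : mv A T S := by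
  have hsa : ContinuousLinearMap.adjoint A = A := hA.1.isSelfAdjoint
  have h : (ContinuousLinearMap.adjoint S).comp A = A.comp T := by
    have h0 := congrArg ContinuousLinearMap.adjoint hS
    rwa [ContinuousLinearMap.adjoint_comp, ContinuousLinearMap.adjoint_comp,
      ContinuousLinearMap.adjoint_adjoint, hsa] at h0
  intro x y
  have h1 : A (T x) = (ContinuousLinearMap.adjoint S) (A x) := by
    have h2 := congrArg (fun (f : H →L[ℂ] H) => f x) h
    simpa using h2.symm
  rw [innA, h1, ContinuousLinearMap.adjoint_inner_left]
  rfl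

end S13

open S13

theorem stmt13 (A T S : H →L[ℂ] H) (hA : StrictPos A) (hS : IsAAdjoint A T S) :
    (wA A T)^3 ≤ (1/4) * wA A (T^3) + (1/4) * wA A (T^2 * S + S * T^2 + T * S * T) := by
  have hB : Br A (CFC.sqrt A) := br_of_strictPos hA
  set Q := CFC.sqrt A with hQdef
  have hmvTS : mv A T S := mv_of_isAAdjoint hA hS
  by_cases hone : ∃ x : H, vnormA A x = 1
  swap
  · have hempty : ∀ X : H →L[ℂ] H, wA A X = 0 := by
      intro X
      rw [wA_eq]
      have h0 : setW A X = ∅ := by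
        rw [Set.eq_empty_iff_forall_notMem]
        rintro r ⟨x, hx, _⟩
        exact hone ⟨x, hx⟩
      rw [h0, Real.sSup_empty]
    rw [hempty, hempty, hempty]
    norm_num
  by_cases hbT : BddAbove (setW A T)
  swap
  · rw [wA_eq, Real.sSup_of_not_bddAbove hbT]
    have h1 := wA_nonneg hone (T^3)
    have h2 := wA_nonneg hone (T^2 * S + S * T^2 + T * S * T)
    norm_num
    linarith
  set P : H →L[ℂ] H := T^2 * S + S * T^2 + T * S * T with hPdef
  set P' : H →L[ℂ] H := T*(S*S) + (S*S)*T + S*(T*S) with hP'def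
  have hwT0 : 0 ≤ wA A T := wA_nonneg hone T
  have hwbT : wb A Q (wA A T) T := wA_wb hB hone hbT
  have hwbS : wb A Q (wA A T) S := by
    intro x
    rw [mv.abs_eq hB hmvTS x]
    exact hwbT x
  have hnT : nb Q (2*(wA A T)) T := wb.nb hB hwbT hwT0
  have hnS : nb Q (2*(wA A T)) S := wb.nb hB hwbS hwT0
  have hmvST : mv A S T := mv.symm hB hmvTS
  have hmvTT : mv A (T*T) (S*S) := mv.comp hmvTS hmvTS
  have hmvT3 : mv A (T^3) (S*(S*S)) := by
    have e : T^3 = (T*T)*T := by rw [pow_succ, pow_two]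
    rw [e]
    exact mv.comp hmvTT hmvTS
  have hmvP : mv A P P' := by
    have c1 : mv A (T^2*S) (T*(S*S)) := by
      rw [pow_two]
      exact mv.comp hmvTT hmvST
    have c2 : mv A (S*T^2) ((S*S)*T) := by
      rw [pow_two]
      exact mv.comp hmvST hmvTT
    have c3 : mv A (T*S*T) (S*(T*S)) := mv.comp (mv.comp hmvTS hmvST) hmvTS
    exact mv.add (mv.add c1 c2) c3
  have hnTT : nb Q ((2*(wA A T))*(2*(wA A T))) (T*T) := by
    intro x
    rw [ContinuousLinearMap.mul_apply]
    calc ‖Q (T (T x))‖ ≤ 2*(wA A T) * ‖Q (T x)‖ := hnT _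
      _ ≤ 2*(wA A T) * (2*(wA A T) * ‖Q x‖) :=
          mul_le_mul_of_nonneg_left (hnT x) (by positivity)
      _ = (2*(wA A T))*(2*(wA A T)) * ‖Q x‖ := by ring
  have hnT3 : nb Q ((2*(wA A T))*(2*(wA A T))*(2*(wA A T))) (T^3) := by
    intro x
    have e : (T^3) x = (T*T) (T x) := by
      rw [pow_succ, pow_two]
      simp [ContinuousLinearMap.mul_apply]
    rw [e]
    calc ‖Q ((T*T) (T x))‖ ≤ (2*(wA A T))*(2*(wA A T)) * ‖Q (T x)‖ := hnTT _
      _ ≤ (2*(wA A T))*(2*(wA A T)) * (2*(wA A T) * ‖Q x‖) :=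
          mul_le_mul_of_nonneg_left (hnT x) (by positivity)
      _ = (2*(wA A T))*(2*(wA A T))*(2*(wA A T)) * ‖Q x‖ := by ring
  have hbT3 : BddAbove (setW A (T^3)) := bddAbove_of_wb hB (nb.wb hB hnT3)
  have hnP : nb Q (3*((2*(wA A T))*(2*(wA A T))*(2*(wA A T)))) P := by
    have w1 : ∀ x : H, ‖Q ((T^2*S) x)‖ ≤ (2*(wA A T))*(2*(wA A T))*(2*(wA A T)) * ‖Q x‖ := by
      intro x
      have e : (T^2*S) x = (T*T) (S x) := by
        rw [pow_two]; simp [ContinuousLinearMap.mul_apply]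
      rw [e]
      calc ‖Q ((T*T) (S x))‖ ≤ (2*(wA A T))*(2*(wA A T)) * ‖Q (S x)‖ := hnTT _
        _ ≤ (2*(wA A T))*(2*(wA A T)) * (2*(wA A T) * ‖Q x‖) :=
            mul_le_mul_of_nonneg_left (hnS x) (by positivity)
        _ = (2*(wA A T))*(2*(wA A T))*(2*(wA A T)) * ‖Q x‖ := by ring
    have w2 : ∀ x : H, ‖Q ((S*T^2) x)‖ ≤ (2*(wA A T))*(2*(wA A T))*(2*(wA A T)) * ‖Q x‖ := by
      intro x
      have e : (S*T^2) x = S ((T*T) x) := by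
        rw [pow_two]; simp [ContinuousLinearMap.mul_apply]
      rw [e]
      calc ‖Q (S ((T*T) x))‖ ≤ 2*(wA A T) * ‖Q ((T*T) x)‖ := hnS _
        _ ≤ 2*(wA A T) * ((2*(wA A T))*(2*(wA A T)) * ‖Q x‖) :=
            mul_le_mul_of_nonneg_left (hnTT x) (by positivity)
        _ = (2*(wA A T))*(2*(wA A T))*(2*(wA A T)) * ‖Q x‖ := by ring
    have w3 : ∀ x : H, ‖Q ((T*S*T) x)‖ ≤ (2*(wA A T))*(2*(wA A T))*(2*(wA A T)) * ‖Q x‖ := by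
      intro x
      have e : (T*S*T) x = T (S (T x)) := by simp [ContinuousLinearMap.mul_apply]
      rw [e]
      calc ‖Q (T (S (T x)))‖ ≤ 2*(wA A T) * ‖Q (S (T x))‖ := hnT _
        _ ≤ 2*(wA A T) * (2*(wA A T) * ‖Q (T x)‖) :=
            mul_le_mul_of_nonneg_left (hnS _) (by positivity)
        _ ≤ 2*(wA A T) * (2*(wA A T) * (2*(wA A T) * ‖Q x‖)) := by
            apply mul_le_mul_of_nonneg_left _ (by positivity)
            exact mul_le_mul_of_nonneg_left (hnT x) (by positivity)
        _ = (2*(wA A T))*(2*(wA A T))*(2*(wA A T)) * ‖Q x‖ := by ring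
    intro x
    have e : P x = (T^2*S) x + (S*T^2) x + (T*S*T) x := by
      rw [hPdef]; simp
    rw [e]
    calc ‖Q ((T^2*S) x + (S*T^2) x + (T*S*T) x)‖
        ≤ ‖Q ((T^2*S) x)‖ + ‖Q ((S*T^2) x)‖ + ‖Q ((T*S*T) x)‖ := by
          rw [map_add, map_add]
          exact le_trans (norm_add_le _ _)
            (by linarith [norm_add_le (Q ((T^2*S) x)) (Q ((S*T^2) x))])
      _ ≤ 3*((2*(wA A T))*(2*(wA A T))*(2*(wA A T))) * ‖Q x‖ := by
          linarith [w1 x, w2 x, w3 x]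
  have hbP : BddAbove (setW A P) := bddAbove_of_wb hB (nb.wb hB hnP)
  have hwT3 : wb A Q (wA A (T^3)) (T^3) := wA_wb hB hone hbT3
  have hwP : wb A Q (wA A P) P := wA_wb hB hone hbP
  have hwT30 : 0 ≤ wA A (T^3) := wA_nonneg hone _
  have hwP0 : 0 ≤ wA A P := wA_nonneg hone _
  set u : ℝ := 2 * wA A (T^3) + 2 * wA A P with hudef
  have hu0 : 0 ≤ u := by positivity
  set K : ℝ := (u/8) ^ ((1:ℝ)/3) with hKdef
  have hK0 : 0 ≤ K := Real.rpow_nonneg (by positivity) _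
  have hK3 : K^3 = u/8 := by
    rw [hKdef, ← Real.rpow_natCast ((u/8) ^ ((1:ℝ)/3)) 3, ← Real.rpow_mul (by positivity)]
    norm_num
  have claimX : ∀ x : H, vnormA A x = 1 → ‖innA A (T x) x‖ ≤ K := by
    intro x hx
    by_cases hz : innA A (T x) x = 0
    · rw [hz]
      simpa using hK0
    set z : ℂ := innA A (T x) x with hzdef
    set r : ℝ := ‖z‖ with hrdef
    have hr0 : 0 < r := by
      rw [hrdef]
      exact norm_pos_iff.mpr hz
    set a : ℂ := z / (r:ℂ) with hadef
    have har : ‖a‖ = 1 := by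
      rw [hadef, norm_div, Complex.norm_real, Real.norm_eq_abs, _root_.abs_of_pos hr0]
      rw [← hrdef]
      exact div_self (ne_of_gt hr0)
    set b : ℂ := starRingEnd ℂ a with hbdef
    have hbr : ‖b‖ = 1 := by rw [hbdef, Complex.norm_conj, har]
    set R : H →L[ℂ] H := a • T + b • S with hRdef
    have hsaR : mv A R R := by
      have m1 : mv A (a • T) (b • S) := by
        rw [hbdef]; exact mv.smul a hmvTS
      have m2 : mv A (b • S) (a • T) := by
        simpa [hbdef, Complex.conj_conj] using mv.smul b hmvST
      rw [hRdef]
      have hadd := mv.add m1 m2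
      rwa [add_comm (b • S) (a • T)] at hadd
    have hnR : nb Q (4*(wA A T)) R := by
      intro y
      have e : R y = a • (T y) + b • (S y) := by rw [hRdef]; simp
      rw [e, map_add, map_smul, map_smul]
      calc ‖a • Q (T y) + b • Q (S y)‖ ≤ ‖a • Q (T y)‖ + ‖b • Q (S y)‖ := norm_add_le _ _
        _ = ‖Q (T y)‖ + ‖Q (S y)‖ := by
            rw [norm_smul, norm_smul, har, hbr]
            ring
        _ ≤ 2*(wA A T) * ‖Q y‖ + 2*(wA A T) * ‖Q y‖ := add_le_add (hnT y) (hnS y)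
        _ = 4*(wA A T) * ‖Q y‖ := by ring
    have hbR : BddAbove (setW A R) := bddAbove_of_wb hB (nb.wb hB hnR)
    have hwR : wb A Q (wA A R) R := wA_wb hB hone hbR
    have hwR0 : 0 ≤ wA A R := wA_nonneg hone R
    have hexp : R*(R*R) = (a*(a*a)) • (T^3) + (b*(b*b)) • (S*(S*S))
        + (a*(a*b)) • P + (a*(b*b)) • P' := by
      rw [hRdef, hPdef, hP'def]
      simp only [pow_succ, pow_zero, one_mul, mul_add, add_mul, smul_add,
        smul_mul_assoc, mul_smul_comm, smul_smul, mul_assoc]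
      match_scalars <;> ring
    have hwb3 : wb A Q u (R*(R*R)) := by
      intro y
      have ey : innA A ((R*(R*R)) y) y
          = (starRingEnd ℂ (a*(a*a))) * innA A ((T^3) y) y
          + (starRingEnd ℂ (b*(b*b))) * innA A ((S*(S*S)) y) y
          + (starRingEnd ℂ (a*(a*b))) * innA A (P y) y
          + (starRingEnd ℂ (a*(b*b))) * innA A (P' y) y := by
        rw [hexp]
        simp only [ContinuousLinearMap.add_apply, ContinuousLinearMap.smul_apply,
          innA_add_left, innA_smul_left]
      rw [ey]
      have k1 : ‖a*(a*a)‖ = 1 := by rw [norm_mul, norm_mul, har]; ring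
      have k2 : ‖b*(b*b)‖ = 1 := by rw [norm_mul, norm_mul, hbr]; ring
      have k3 : ‖a*(a*b)‖ = 1 := by rw [norm_mul, norm_mul, har, hbr]; ring
      have k4 : ‖a*(b*b)‖ = 1 := by rw [norm_mul, norm_mul, har, hbr]; ring
      have eS : ‖innA A ((S*(S*S)) y) y‖ = ‖innA A ((T^3) y) y‖ :=
        mv.abs_eq hB hmvT3 y
      have eP : ‖innA A (P' y) y‖ = ‖innA A (P y) y‖ :=
        mv.abs_eq hB hmvP y
      have b1 : ‖(starRingEnd ℂ (a*(a*a))) * innA A ((T^3) y) y‖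
          ≤ wA A (T^3) * ‖Q y‖^2 := by
        rw [norm_mul, Complex.norm_conj, k1, one_mul]
        exact hwT3 y
      have b2 : ‖(starRingEnd ℂ (b*(b*b))) * innA A ((S*(S*S)) y) y‖
          ≤ wA A (T^3) * ‖Q y‖^2 := by
        rw [norm_mul, Complex.norm_conj, k2, one_mul, eS]
        exact hwT3 y
      have b3 : ‖(starRingEnd ℂ (a*(a*b))) * innA A (P y) y‖
          ≤ wA A P * ‖Q y‖^2 := by
        rw [norm_mul, Complex.norm_conj, k3, one_mul]
        exact hwP y
      have b4 : ‖(starRingEnd ℂ (a*(b*b))) * innA A (P' y) y‖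
          ≤ wA A P * ‖Q y‖^2 := by
        rw [norm_mul, Complex.norm_conj, k4, one_mul, eP]
        exact hwP y
      have tr1 := absC_add_le
        ((starRingEnd ℂ (a*(a*a))) * innA A ((T^3) y) y
          + (starRingEnd ℂ (b*(b*b))) * innA A ((S*(S*S)) y) y
          + (starRingEnd ℂ (a*(a*b))) * innA A (P y) y)
        ((starRingEnd ℂ (a*(b*b))) * innA A (P' y) y)
      have tr2 := absC_add_le
        ((starRingEnd ℂ (a*(a*a))) * innA A ((T^3) y) y
          + (starRingEnd ℂ (b*(b*b))) * innA A ((S*(S*S)) y) y)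
        ((starRingEnd ℂ (a*(a*b))) * innA A (P y) y)
      have tr3 := absC_add_le
        ((starRingEnd ℂ (a*(a*a))) * innA A ((T^3) y) y)
        ((starRingEnd ℂ (b*(b*b))) * innA A ((S*(S*S)) y) y)
      rw [hudef]
      nlinarith [b1, b2, b3, b4, tr1, tr2, tr3]
    have hle : ∀ w' : ℝ, 0 ≤ w' → wb A Q w' R → wA A R ≤ w' := by
      intro w' _ hw'
      apply wA_le hone
      intro y hy
      have h0 := hw' y
      rw [vnorm_eq hB] at hy
      rw [hy] at h0
      simpa using h0
    have hless : (wA A R)^3 ≤ u := key hB hsaR hu0 hwR0 hwR hwb3 hle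
    have hSx : innA A (S x) x = starRingEnd ℂ z := by
      rw [hmvST x x]
      exact conj_symm hB (T x) x
    have hca : starRingEnd ℂ a * z = (r:ℂ) := by
      rw [hadef, map_div₀, Complex.conj_ofReal]
      rw [div_mul_eq_mul_div, mul_comm, Complex.mul_conj, Complex.normSq_eq_norm_sq]
      rw [← hrdef]
      push_cast
      rw [pow_two, mul_div_assoc, div_self (by exact_mod_cast ne_of_gt hr0), mul_one]
    have hval : innA A (R x) x = ((2*r:ℝ):ℂ) := by
      have e : R x = a • (T x) + b • (S x) := by rw [hRdef]; simp
      rw [e, innA_add_left, innA_smul_left, innA_smul_left]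
      rw [hSx, ← hzdef, hbdef, Complex.conj_conj, hca]
      have h0 : a * starRingEnd ℂ z = (r:ℂ) := by
        have h1 := congrArg (starRingEnd ℂ) hca
        rwa [map_mul, Complex.conj_conj, Complex.conj_ofReal] at h1
      rw [h0]
      push_cast
      ring
    have h2r : 2*r ≤ wA A R := by
      have hh := le_wA hbR hx
      rw [hval] at hh
      rwa [Complex.norm_real, Real.norm_eq_abs, _root_.abs_of_nonneg (by positivity)] at hh
    have hcube : (2*r)^3 ≤ u :=
      le_trans (pow_le_pow_left₀ (by positivity) h2r 3) hless
    have hr3 : r^3 ≤ K^3 := by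
      rw [hK3]
      nlinarith [hcube]
    by_contra hcon
    push_neg at hcon
    have : K^3 < r^3 := pow_lt_pow_left₀ hcon hK0 (by norm_num)
    linarith
  have hfinal : wA A T ≤ K := wA_le hone claimX
  have hpow : (wA A T)^3 ≤ K^3 := pow_le_pow_left₀ hwT0 hfinal 3
  rw [hK3, hudef] at hpow
  linarith
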